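/- Let n ≥ 1, let 𝒟 be a dyadic grid on ℝⁿ, fix an integer r ≥ 1, 0 < ε < 1 and γ ≥ 2, and let K ∈ 𝒟. Let M_{(r,ε)-deep}(K) be the set of maximal dyadic cubes J with J ⋐_{r,ε} K. Then: (i) there is a constant β, depending only on n, γ, r and ε, such that Σ_{J ∈ M_{(r,ε)-deep}(K)} 1_{γJ}(y) ≤ β for every y ∈ ℝⁿ, i.e. Σ_{J} 1_{γJ} ≤ β · 1_{⋃_J γJ}; (ii) if in addition γ + 1 ≤ 2^{r(1−ε)}, then γJ ⊆ K for every J ∈ M_{(r,ε)-deep}(K), and consequently Σ_{J ∈ M_{(r,ε)-deep}(K)} 1_{γJ} ≤ β · 1_K. -/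

import Mathlib

open MeasureTheory
open scoped ENNReal NNReal

noncomputable section

/-- An axis-parallel half-open cube in `ℝⁿ`, given by its corner `a` and side length `l`. -/
structure QCube (n : ℕ) where
  a : Fin n → ℝ
  l : ℝ

/-- The half-open cube as a subset of `ℝⁿ`. -/
def QCube.pts {n : ℕ} (Q : QCube n) : Set (EuclideanSpace ℝ (Fin n)) :=
  {x | ∀ i, Q.a i ≤ x i ∧ x i < Q.a i + Q.l}

/-- The concentric dilate `γQ` of a cube `Q`. -/
def QCube.dilate {n : ℕ} (Q : QCube n) (γ : ℝ) : QCube n :=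
  ⟨fun i => Q.a i + Q.l / 2 - γ * Q.l / 2, γ * Q.l⟩

/-- The dyadic grid on `ℝⁿ` obtained by translating the standard grid by `t`. -/
def dyadicGrid {n : ℕ} (t : Fin n → ℝ) : Set (QCube n) :=
  {Q | ∃ (k : ℤ) (m : Fin n → ℤ),
    Q = ⟨fun i => t i + (2:ℝ) ^ (-k) * (m i : ℝ), (2:ℝ) ^ (-k)⟩}

/-- `J ⋐_{r,ε} K` : `J` is `(r,ε)`-deeply embedded in `K`, i.e. `J ⊆ K`,
`ℓ(J) ≤ 2^{−r} ℓ(K)`, and `dist(J, ℝⁿ∖K) ≥ ½ ℓ(J)^ε ℓ(K)^{1−ε}`. -/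
def deepEmb {n : ℕ} (r : ℕ) (ε : ℝ) (J K : QCube n) : Prop :=
  J.pts ⊆ K.pts ∧ J.l ≤ 2 ^ (-(r : ℝ)) * K.l ∧
    ∀ x ∈ J.pts, ∀ y ∉ K.pts, 1 / 2 * J.l ^ ε * K.l ^ (1 - ε) ≤ dist x y

/-- `J` belongs to `M_{(r,ε)-deep}(K)`: `J` is a dyadic cube of the grid `t` that is a
maximal dyadic cube `(r,ε)`-deeply embedded in `K`. -/
def maxDeepEmb {n : ℕ} (t : Fin n → ℝ) (r : ℕ) (ε : ℝ) (J K : QCube n) : Prop :=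
  J ∈ dyadicGrid t ∧ deepEmb r ε J K ∧
    ∀ J' ∈ dyadicGrid t, J.pts ⊆ J'.pts → deepEmb r ε J' K → J'.pts ⊆ J.pts

namespace S4

variable {n : ℕ}

/-- dyadic grid cube -/
def gc (t : Fin n → ℝ) (k : ℤ) (m : Fin n → ℤ) : QCube n :=
  ⟨fun i => t i + (2:ℝ) ^ (-k) * (m i : ℝ), (2:ℝ) ^ (-k)⟩

lemma mem_grid_iff {t : Fin n → ℝ} {Q : QCube n} :
    Q ∈ dyadicGrid t ↔ ∃ k m, Q = gc t k m := Iff.rfl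

lemma gc_l (t : Fin n → ℝ) (k : ℤ) (m : Fin n → ℤ) : (gc t k m).l = (2:ℝ) ^ (-k) := rfl

lemma gc_a (t : Fin n → ℝ) (k : ℤ) (m : Fin n → ℤ) (i : Fin n) :
    (gc t k m).a i = t i + (2:ℝ) ^ (-k) * (m i : ℝ) := rfl

lemma mem_pts_iff {Q : QCube n} {x : EuclideanSpace ℝ (Fin n)} :
    x ∈ Q.pts ↔ ∀ i, Q.a i ≤ x i ∧ x i < Q.a i + Q.l := Iff.rfl

/-- view a raw function as a point of Euclidean space -/
def pt (f : Fin n → ℝ) : EuclideanSpace ℝ (Fin n) := WithLp.toLp 2 f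

lemma pt_apply (f : Fin n → ℝ) (i : Fin n) : pt f i = f i := rfl

lemma corner_mem {Q : QCube n} (hl : 0 < Q.l) : pt Q.a ∈ Q.pts :=
  fun i => ⟨le_refl _, by simpa [pt_apply] using lt_add_of_pos_right (Q.a i) hl⟩

lemma dist_le_of_coords {x y : EuclideanSpace ℝ (Fin n)} {c : ℝ} (hc : 0 ≤ c)
    (h : ∀ i, |x i - y i| ≤ c) : dist x y ≤ n * c := by
  rw [EuclideanSpace.dist_eq]
  have h1 : ∑ i, dist (x i) (y i) ^ 2 ≤ n * c ^ 2 := by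
    calc ∑ i, dist (x i) (y i) ^ 2 ≤ ∑ _i : Fin n, c ^ 2 := by
          apply Finset.sum_le_sum
          intro i _
          rw [Real.dist_eq]
          exact pow_le_pow_left₀ (abs_nonneg _) (h i) 2
      _ = n * c ^ 2 := by simp [mul_comm]
  calc Real.sqrt (∑ i, dist (x i) (y i) ^ 2) ≤ Real.sqrt ((n * c) ^ 2) := by
        apply Real.sqrt_le_sqrt
        calc ∑ i, dist (x i) (y i) ^ 2 ≤ n * c ^ 2 := h1
          _ ≤ (n * c) ^ 2 := by
              have hn' : (n : ℝ) ≤ (n:ℝ)^2 := by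
                have : n ≤ n^2 := Nat.le_self_pow two_ne_zero n
                exact_mod_cast this
              nlinarith [sq_nonneg c]
    _ = n * c := Real.sqrt_sq (by positivity)

lemma dist_single {x z : EuclideanSpace ℝ (Fin n)} {i0 : Fin n}
    (h : ∀ i, i ≠ i0 → x i = z i) : dist x z = |x i0 - z i0| := by
  rw [EuclideanSpace.dist_eq]
  rw [Finset.sum_eq_single i0]
  · rw [Real.dist_eq, Real.sqrt_sq_eq_abs, abs_abs]
  · intro i _ hi; rw [h i hi]; simp
  · intro hh; exact absurd (Finset.mem_univ i0) hh

end S4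

namespace S4
variable {n : ℕ}

lemma dilate_a (Q : QCube n) (γ : ℝ) (i : Fin n) :
    (Q.dilate γ).a i = Q.a i + Q.l / 2 - γ * Q.l / 2 := rfl

lemma dilate_l (Q : QCube n) (γ : ℝ) : (Q.dilate γ).l = γ * Q.l := rfl

lemma dilate_coord {Q : QCube n} {γ : ℝ} {y : EuclideanSpace ℝ (Fin n)}
    (hy : y ∈ (Q.dilate γ).pts) (i : Fin n) :
    |y i - (Q.a i + Q.l / 2)| ≤ γ * Q.l / 2 := by
  have h := hy i
  rw [dilate_a, dilate_l] at h
  rw [abs_le]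
  constructor
  · linarith [h.1]
  · linarith [h.2]

lemma subset_dilate {Q : QCube n} {γ : ℝ} (hγ : 1 ≤ γ) (hl : 0 ≤ Q.l) :
    Q.pts ⊆ (Q.dilate γ).pts := by
  intro x hx i
  have h := hx i
  rw [mem_pts_iff] at *
  rw [dilate_a, dilate_l]
  constructor
  · nlinarith [h.1, h.2]
  · nlinarith [h.1, h.2]

lemma dist_le_of_both_dilate {Q : QCube n} {γ : ℝ} {x y : EuclideanSpace ℝ (Fin n)}
    (hγl : 0 ≤ γ * Q.l) (hx : x ∈ (Q.dilate γ).pts) (hy : y ∈ (Q.dilate γ).pts) :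
    dist x y ≤ n * (γ * Q.l) := by
  apply dist_le_of_coords hγl
  intro i
  have h1 := dilate_coord hx i
  have h2 := dilate_coord hy i
  calc |x i - y i| ≤ |x i - (Q.a i + Q.l/2)| + |(Q.a i + Q.l/2) - y i| := abs_sub_le _ _ _
    _ ≤ γ * Q.l / 2 + γ * Q.l / 2 := by rw [abs_sub_comm (Q.a i + Q.l/2)]; linarith
    _ = γ * Q.l := by ring

lemma dist_le_of_both_mem {Q : QCube n} {x y : EuclideanSpace ℝ (Fin n)}
    (hl : 0 ≤ Q.l) (hx : x ∈ Q.pts) (hy : y ∈ Q.pts) :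
    dist x y ≤ n * Q.l := by
  apply dist_le_of_coords hl
  intro i
  have h1 := hx i
  have h2 := hy i
  rw [abs_le]
  constructor <;> [linarith [h1.1, h2.2]; linarith [h1.2, h2.1]]

lemma two_zpow_pos (k : ℤ) : (0:ℝ) < 2 ^ k := zpow_pos (by norm_num) k

lemma parent_l_eq (k : ℤ) : (2:ℝ) ^ (-(k-1)) = 2 * 2 ^ (-k) := by
  have h : -(k-1) = (-k) + 1 := by ring
  rw [h, zpow_add₀ (two_ne_zero), zpow_one]
  ring

lemma mem_gc_iff {t : Fin n → ℝ} {k : ℤ} {m : Fin n → ℤ} {x : EuclideanSpace ℝ (Fin n)} :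
    x ∈ (gc t k m).pts ↔
      ∀ i, t i + (2:ℝ)^(-k) * (m i : ℝ) ≤ x i ∧ x i < t i + (2:ℝ)^(-k) * (m i : ℝ) + 2^(-k) :=
  Iff.rfl

lemma parent_sub (t : Fin n → ℝ) (k : ℤ) (m : Fin n → ℤ) :
    (gc t k m).pts ⊆ (gc t (k-1) (fun i => m i / 2)).pts := by
  intro x hx
  rw [mem_gc_iff] at hx ⊢
  intro i
  have h := hx i
  have hdiv : 2*(m i/2) ≤ m i ∧ m i ≤ 2*(m i/2)+1 := by omega
  have hc1 : (2*((m i/2 : ℤ):ℝ)) ≤ (m i : ℝ) := by exact_mod_cast hdiv.1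
  have hc2 : (m i : ℝ) ≤ 2*((m i/2 : ℤ):ℝ)+1 := by exact_mod_cast hdiv.2
  have hl : (0:ℝ) < 2^(-k) := two_zpow_pos _
  rw [parent_l_eq]
  have e1 := mul_le_mul_of_nonneg_left hc1 (le_of_lt hl)
  have e2 := mul_le_mul_of_nonneg_left hc2 (le_of_lt hl)
  constructor
  · nlinarith [h.1]
  · nlinarith [h.2]

lemma parent_not_sub (hn : 0 < n) (t : Fin n → ℝ) (k : ℤ) (m : Fin n → ℤ) :
    ¬ ((gc t (k-1) (fun i => m i / 2)).pts ⊆ (gc t k m).pts) := by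
  intro hsub
  have hl : (0:ℝ) < 2^(-k) := two_zpow_pos _
  have hpl : (2:ℝ)^(-(k-1)) = 2 * 2^(-k) := parent_l_eq k
  set i0 : Fin n := ⟨0, hn⟩ with hi0
  -- the value at coordinate i0
  by_cases hcase : 2 * (m i0 / 2) = m i0
  · -- corner of J shifted up by 2^{-k} at i0
    set x : EuclideanSpace ℝ (Fin n) :=
      pt (Function.update (gc t k m).a i0 ((gc t k m).a i0 + 2^(-k))) with hxd
    have hxi0 : x i0 = t i0 + (2:ℝ)^(-k) * (m i0 : ℝ) + 2^(-k) := by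
      show Function.update (gc t k m).a i0 _ i0 = _
      rw [Function.update_self]; rfl
    have hxi : ∀ i, i ≠ i0 → x i = t i + (2:ℝ)^(-k) * (m i : ℝ) := by
      intro i hi
      show Function.update (gc t k m).a i0 _ i = _
      rw [Function.update_of_ne hi]; rfl
    have hxP : x ∈ (gc t (k-1) fun i => m i / 2).pts := by
      rw [mem_gc_iff]
      intro i
      have hdiv : 2*(m i/2) ≤ m i ∧ m i ≤ 2*(m i/2)+1 := by omega
      have hc1 : (2*((m i/2 : ℤ):ℝ)) ≤ (m i : ℝ) := by exact_mod_cast hdiv.1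
      have hc2 : (m i : ℝ) ≤ 2*((m i/2 : ℤ):ℝ)+1 := by exact_mod_cast hdiv.2
      have e1 := mul_le_mul_of_nonneg_left hc1 (le_of_lt hl)
      have e2 := mul_le_mul_of_nonneg_left hc2 (le_of_lt hl)
      rw [hpl]
      by_cases hi : i = i0
      · subst hi
        rw [hxi0]
        have heq : (m i0 : ℝ) = 2*((m i0/2 : ℤ):ℝ) := by exact_mod_cast hcase.symm
        constructor <;> nlinarith
      · rw [hxi i hi]
        constructor <;> nlinarith
    have hxJ := (mem_gc_iff.mp (hsub hxP)) i0
    rw [hxi0] at hxJ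
    linarith [hxJ.2]
  · -- corner of P at i0 (which is strictly below corner of J), corner of J elsewhere
    set x : EuclideanSpace ℝ (Fin n) :=
      pt (Function.update (gc t k m).a i0 (t i0 + (2:ℝ)^(-(k-1)) * ((m i0 / 2 : ℤ) : ℝ))) with hxd
    have hxi0 : x i0 = t i0 + (2:ℝ)^(-(k-1)) * ((m i0 / 2 : ℤ) : ℝ) := by
      show Function.update (gc t k m).a i0 _ i0 = _
      exact Function.update_self ..
    have hxi : ∀ i, i ≠ i0 → x i = t i + (2:ℝ)^(-k) * (m i : ℝ) := by
      intro i hi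
      show Function.update (gc t k m).a i0 _ i = _
      rw [Function.update_of_ne hi]; rfl
    have hxP : x ∈ (gc t (k-1) fun i => m i / 2).pts := by
      rw [mem_gc_iff]
      intro i
      have hdiv : 2*(m i/2) ≤ m i ∧ m i ≤ 2*(m i/2)+1 := by omega
      have hc1 : (2*((m i/2 : ℤ):ℝ)) ≤ (m i : ℝ) := by exact_mod_cast hdiv.1
      have hc2 : (m i : ℝ) ≤ 2*((m i/2 : ℤ):ℝ)+1 := by exact_mod_cast hdiv.2
      have e1 := mul_le_mul_of_nonneg_left hc1 (le_of_lt hl)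
      have e2 := mul_le_mul_of_nonneg_left hc2 (le_of_lt hl)
      rw [hpl]
      by_cases hi : i = i0
      · subst hi
        rw [hxi0, hpl]
        constructor <;> nlinarith
      · rw [hxi i hi]
        constructor <;> nlinarith
    have hxJ := (mem_gc_iff.mp (hsub hxP)) i0
    rw [hxi0, hpl] at hxJ
    have h2q : 2*(m i0/2) + 1 ≤ m i0 := by omega
    have hc : (2*((m i0/2 : ℤ):ℝ)) + 1 ≤ (m i0 : ℝ) := by exact_mod_cast h2q
    have e1 := mul_le_mul_of_nonneg_left hc (le_of_lt hl)
    nlinarith [hxJ.1]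
end S4

namespace S4
variable {n : ℕ}

lemma zpow_eq_rpow (a : ℤ) : (2:ℝ) ^ a = (2:ℝ) ^ (a : ℝ) := (Real.rpow_intCast 2 a).symm

lemma neg_r_eq (r : ℕ) : (2:ℝ) ^ (-(r:ℝ)) = (2:ℝ) ^ (-(r:ℤ)) := by
  rw [zpow_eq_rpow]; norm_num

/-- the key quantity ℓ(J)^ε ℓ(K)^{1-ε} -/
def D (j k : ℤ) (ε : ℝ) : ℝ := ((2:ℝ)^(-j)) ^ ε * ((2:ℝ)^(-k)) ^ (1-ε)

lemma D_eq (j k : ℤ) (ε : ℝ) : D j k ε = (2:ℝ) ^ ((-(j:ℝ))*ε + (-(k:ℝ))*(1-ε)) := by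
  rw [D, zpow_eq_rpow, zpow_eq_rpow,
    ← Real.rpow_mul (by norm_num : (0:ℝ) ≤ 2), ← Real.rpow_mul (by norm_num : (0:ℝ) ≤ 2),
    ← Real.rpow_add (by norm_num : (0:ℝ) < 2)]
  push_cast
  ring_nf

lemma D_pos (j k : ℤ) (ε : ℝ) : 0 < D j k ε := by
  rw [D_eq]; exact Real.rpow_pos_of_pos (by norm_num) _

lemma l_le_D {j k : ℤ} {ε : ℝ} (hjk : k ≤ j) (hε1 : ε ≤ 1) : (2:ℝ)^(-j) ≤ D j k ε := by
  rw [D_eq, zpow_eq_rpow]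
  apply Real.rpow_le_rpow_of_exponent_le (by norm_num)
  have hjk' : (-(j:ℝ)) ≤ -(k:ℝ) := by exact_mod_cast neg_le_neg hjk
  push_cast
  nlinarith [hjk']

lemma D_ratio (j₁ j₂ k : ℤ) (ε : ℝ) :
    D j₁ k ε = (2:ℝ) ^ (((j₂:ℝ) - j₁)*ε) * D j₂ k ε := by
  rw [D_eq, D_eq, ← Real.rpow_add (by norm_num : (0:ℝ) < 2)]
  ring_nf

lemma scale_ge {t : Fin n → ℝ} {k j : ℤ} {mk m : Fin n → ℤ} {r : ℕ} {ε : ℝ}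
    (h : deepEmb r ε (gc t j m) (gc t k mk)) : k + r ≤ j := by
  have h1 := h.2.1
  rw [gc_l, gc_l, neg_r_eq, ← zpow_add₀ (two_ne_zero : (2:ℝ) ≠ 0)] at h1
  have := (zpow_le_zpow_iff_right₀ (by norm_num : (1:ℝ) < 2)).mp h1
  omega

lemma lower_bound {t : Fin n → ℝ} {k j : ℤ} {mk m : Fin n → ℤ} {r : ℕ} {ε γ : ℝ}
    (hγ : 2 ≤ γ) (hd : deepEmb r ε (gc t j m) (gc t k mk))
    {y z : EuclideanSpace ℝ (Fin n)} (hy : y ∈ ((gc t j m).dilate γ).pts)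
    (hz : z ∉ (gc t k mk).pts) :
    1/2 * D j k ε ≤ dist y z + n * (γ * 2^(-j)) := by
  have hlp : (0:ℝ) < 2^(-j) := two_zpow_pos _
  have hx : pt (gc t j m).a ∈ (gc t j m).pts := corner_mem hlp
  have h1 := hd.2.2 _ hx z hz
  have hxy : dist (pt (gc t j m).a) y ≤ n * (γ * 2^(-j)) :=
    dist_le_of_both_dilate (by positivity)
      (subset_dilate (by linarith) (le_of_lt hlp) hx) hy
  have htri : dist (pt (gc t j m).a) z ≤ dist (pt (gc t j m).a) y + dist y z :=
    dist_triangle _ _ _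
  have hD : 1/2 * (gc t j m).l ^ ε * (gc t k mk).l ^ (1-ε) = 1/2 * D j k ε := by
    rw [gc_l, gc_l, D]; ring
  rw [hD] at h1
  linarith

lemma upper_bound (hn : 0 < n) {t : Fin n → ℝ} {k j : ℤ} {mk m : Fin n → ℤ} {r : ℕ} {ε γ : ℝ}
    (hγ : 2 ≤ γ) (hε0 : 0 < ε) (hε1 : ε < 1)
    (hmax : maxDeepEmb t r ε (gc t j m) (gc t k mk))
    (hj : k + r < j)
    {y : EuclideanSpace ℝ (Fin n)} (hy : y ∈ ((gc t j m).dilate γ).pts) :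
    ∃ z, z ∉ (gc t k mk).pts ∧ dist y z ≤ ((n:ℝ) * (γ + 2) + 1) * D j k ε := by
  have hlp : (0:ℝ) < 2^(-j) := two_zpow_pos _
  have hDpos := D_pos j k ε
  have hkj : k ≤ j := by omega
  have hlD : (2:ℝ)^(-j) ≤ D j k ε := l_le_D hkj (le_of_lt hε1)
  have hx : pt (gc t j m).a ∈ (gc t j m).pts := corner_mem hlp
  have hyx : dist y (pt (gc t j m).a) ≤ (n:ℝ) * (γ * 2^(-j)) := by
    rw [dist_comm]
    exact dist_le_of_both_dilate (by positivity)
      (subset_dilate (by linarith) (le_of_lt hlp) hx) hy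
  have hPl : (gc t (j-1) (fun i => m i / 2)).l = 2 * 2^(-j) := by
    rw [gc_l]; exact parent_l_eq j
  have hPgrid : gc t (j-1) (fun i => m i / 2) ∈ dyadicGrid t := ⟨j-1, _, rfl⟩
  have hPnd : ¬ deepEmb r ε (gc t (j-1) (fun i => m i / 2)) (gc t k mk) := by
    intro h
    exact parent_not_sub hn t j m (hmax.2.2 _ hPgrid (parent_sub t j m) h)
  have hPsize : (gc t (j-1) (fun i => m i / 2)).l ≤ 2^(-(r:ℝ)) * (gc t k mk).l := by
    rw [gc_l, gc_l, neg_r_eq, ← zpow_add₀ (two_ne_zero : (2:ℝ) ≠ 0)]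
    exact (zpow_le_zpow_iff_right₀ (by norm_num : (1:ℝ) < 2)).mpr (by omega)
  have hn1 : (1:ℝ) ≤ n := by exact_mod_cast hn
  rw [deepEmb] at hPnd
  push_neg at hPnd
  by_cases hPK : (gc t (j-1) (fun i => m i / 2)).pts ⊆ (gc t k mk).pts
  · obtain ⟨x', hx'P, z, hz, hdist⟩ := hPnd hPK hPsize
    refine ⟨z, hz, ?_⟩
    have hxx' : dist (pt (gc t j m).a) x' ≤ (n:ℝ) * (2 * 2^(-j)) := by
      have := dist_le_of_both_mem (Q := gc t (j-1) (fun i => m i / 2))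
        (by rw [hPl]; positivity) (parent_sub t j m hx) hx'P
      rwa [hPl] at this
    have hP2 : 1/2 * (gc t (j-1) (fun i => m i / 2)).l ^ ε * (gc t k mk).l ^ (1-ε)
        ≤ D j k ε := by
      rw [hPl, gc_l]
      have h2e : ((2:ℝ) * 2^(-j)) ^ ε ≤ 2 * (2^(-j):ℝ) ^ ε := by
        rw [Real.mul_rpow (by norm_num) (le_of_lt hlp)]
        have : (2:ℝ) ^ ε ≤ 2 := by
          nth_rewrite 2 [← Real.rpow_one 2]
          exact Real.rpow_le_rpow_of_exponent_le (by norm_num) (le_of_lt hε1)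
        nlinarith [Real.rpow_nonneg (le_of_lt hlp) ε]
      have hK : (0:ℝ) < ((2:ℝ)^(-k)) ^ (1-ε) := by positivity
      rw [D]
      nlinarith
    have htri : dist y z ≤ dist y (pt (gc t j m).a) + dist (pt (gc t j m).a) x' + dist x' z :=
      dist_triangle4 _ _ _ _
    have hc : (n:ℝ) * (γ * 2^(-j)) + (n:ℝ) * (2 * 2^(-j)) ≤ (n:ℝ) * (γ + 2) * D j k ε := by
      have : (n:ℝ) * (γ * 2^(-j)) + (n:ℝ) * (2 * 2^(-j)) = (n:ℝ) * (γ+2) * 2^(-j) := by ring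
      rw [this]
      have hng : (0:ℝ) ≤ (n:ℝ)*(γ+2) := by positivity
      exact mul_le_mul_of_nonneg_left hlD hng
    nlinarith [hdist, hP2]
  · obtain ⟨z, hzP, hz⟩ := Set.not_subset.mp hPK
    refine ⟨z, hz, ?_⟩
    have hxz : dist (pt (gc t j m).a) z ≤ (n:ℝ) * (2 * 2^(-j)) := by
      have := dist_le_of_both_mem (Q := gc t (j-1) (fun i => m i / 2))
        (by rw [hPl]; positivity) (parent_sub t j m hx) hzP
      rwa [hPl] at this
    have htri : dist y z ≤ dist y (pt (gc t j m).a) + dist (pt (gc t j m).a) z :=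
      dist_triangle _ _ _
    have hc : (n:ℝ) * (γ * 2^(-j)) + (n:ℝ) * (2 * 2^(-j)) ≤ (n:ℝ) * (γ + 2) * D j k ε := by
      have he : (n:ℝ) * (γ * 2^(-j)) + (n:ℝ) * (2 * 2^(-j)) = (n:ℝ) * (γ+2) * 2^(-j) := by ring
      rw [he]
      exact mul_le_mul_of_nonneg_left hlD (by positivity)
    nlinarith

/-- threshold offset for "tiny" scales -/
def A0 (n : ℕ) (γ ε : ℝ) : ℕ := ⌈Real.logb 2 (4*(n:ℝ)*γ) / (1-ε)⌉₊

lemma tiny_cond {j k : ℤ} {γ ε : ℝ} (hn : 0 < n) (hγ : 2 ≤ γ) (hε0 : 0 < ε) (hε1 : ε < 1)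
    (hj : k + (A0 n γ ε : ℤ) ≤ j) :
    4*((n:ℝ)*γ) * 2^(-j) ≤ D j k ε := by
  have hn1 : (1:ℝ) ≤ n := by exact_mod_cast hn
  have hpos : (0:ℝ) < 4*(n:ℝ)*γ := by nlinarith
  have h1 : Real.logb 2 (4*(n:ℝ)*γ) / (1-ε) ≤ (A0 n γ ε : ℝ) := Nat.le_ceil _
  have h2 : Real.logb 2 (4*(n:ℝ)*γ) ≤ (A0 n γ ε : ℝ) * (1-ε) := by
    rw [div_le_iff₀ (by linarith)] at h1; linarith
  have h3 : ((A0 n γ ε : ℝ)) ≤ (j:ℝ) - k := by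
    have : (A0 n γ ε : ℤ) ≤ j - k := by omega
    exact_mod_cast this
  have h4 : Real.logb 2 (4*(n:ℝ)*γ) ≤ ((j:ℝ)-k)*(1-ε) :=
    le_trans h2 (mul_le_mul_of_nonneg_right h3 (by linarith))
  have h5 : 4*(n:ℝ)*γ ≤ 2 ^ (((j:ℝ)-k)*(1-ε)) := by
    calc 4*(n:ℝ)*γ = 2 ^ Real.logb 2 (4*(n:ℝ)*γ) :=
          (Real.rpow_logb (by norm_num) (by norm_num) hpos).symm
      _ ≤ _ := Real.rpow_le_rpow_of_exponent_le (by norm_num) h4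
  rw [zpow_eq_rpow, D_eq]
  have hjr : ((-j : ℤ) : ℝ) = -(j:ℝ) := by push_cast; ring
  rw [hjr]
  have h6 := mul_le_mul_of_nonneg_right h5
    (le_of_lt (Real.rpow_pos_of_pos (by norm_num : (0:ℝ)<2) (-(j:ℝ))))
  rw [← Real.rpow_add (by norm_num : (0:ℝ) < 2)] at h6
  calc 4*((n:ℝ)*γ) * 2^(-(j:ℝ)) = 4*(n:ℝ)*γ * 2^(-(j:ℝ)) := by ring
    _ ≤ 2 ^ (((j:ℝ)-k)*(1-ε) + -(j:ℝ)) := h6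
    _ = 2 ^ ((-(j:ℝ))*ε + (-(k:ℝ))*(1-ε)) := by ring_nf

lemma gap {j₁ j₂ k : ℤ} {ε C : ℝ} (hC : 1 ≤ C) (hε0 : 0 < ε)
    (h : 1/4 * D j₂ k ε ≤ C * D j₁ k ε) :
    j₁ - j₂ ≤ (⌈Real.logb 2 (4*C)/ε⌉₊ : ℤ) := by
  have hD2 := D_pos j₂ k ε
  set a : ℝ := ((j₁:ℝ) - j₂) * ε with ha
  have he : ((j₂:ℝ) - j₁) * ε = -a := by rw [ha]; ring
  rw [D_ratio j₁ j₂ k ε, he, ← mul_assoc] at h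
  have h' : 1/4 ≤ C * 2^(-a) := (mul_le_mul_iff_left₀ hD2).mp h
  have hprod : (2:ℝ)^(-a) * 2^a = 1 := by
    rw [← Real.rpow_add (by norm_num : (0:ℝ)<2)]; norm_num
  have hpa : (0:ℝ) < 2^a := Real.rpow_pos_of_pos (by norm_num) a
  have h2 : (2:ℝ)^a ≤ 4*C := by
    have hm := mul_le_mul_of_nonneg_right h' (le_of_lt hpa)
    rw [mul_assoc, hprod, mul_one] at hm
    linarith
  have h3 : a ≤ Real.logb 2 (4*C) := by
    have := (Real.logb_le_logb (by norm_num : (1:ℝ) < 2) hpa (by linarith : (0:ℝ) < 4*C)).mpr h2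
    rwa [Real.logb_rpow (by norm_num : (0:ℝ) < 2) (by norm_num : (2:ℝ) ≠ 1)] at this
  have h4 : ((j₁:ℝ) - j₂) ≤ Real.logb 2 (4*C)/ε := by
    rw [le_div_iff₀ hε0]; exact h3
  have h5 : ((j₁:ℝ) - j₂) ≤ (⌈Real.logb 2 (4*C)/ε⌉₊ : ℝ) := le_trans h4 (Nat.le_ceil _)
  exact_mod_cast h5

lemma m_mem_box {t : Fin n → ℝ} {j : ℤ} {m : Fin n → ℤ} {γ : ℝ}
    {y : EuclideanSpace ℝ (Fin n)}
    (hy : y ∈ ((gc t j m).dilate γ).pts) (i : Fin n) :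
    m i ∈ Finset.Icc ⌊(y i - t i)/(2:ℝ)^(-j) - (γ+1)/2⌋
      ⌊(y i - t i)/(2:ℝ)^(-j) + (γ-1)/2⌋ := by
  have hlp : (0:ℝ) < 2^(-j) := two_zpow_pos _
  have h := dilate_coord hy i
  rw [gc_a, gc_l, abs_le] at h
  set l : ℝ := (2:ℝ)^(-j) with hld
  set u : ℝ := (y i - t i)/l with hu
  have hul : y i - t i = u * l := by rw [hu]; field_simp
  have mhigh : (m i : ℝ) ≤ u + (γ-1)/2 := by
    have hh : l * (m i : ℝ) ≤ l * (u + (γ-1)/2) := by nlinarith [h.1]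
    exact (mul_le_mul_iff_right₀ hlp).mp hh
  have mlow : u - (γ+1)/2 ≤ (m i : ℝ) := by
    have hh : l * (u - (γ+1)/2) ≤ l * (m i : ℝ) := by nlinarith [h.2]
    exact (mul_le_mul_iff_right₀ hlp).mp hh
  rw [Finset.mem_Icc]
  constructor
  · exact (Int.floor_mono mlow).trans (Int.floor_intCast (m i)).le
  · exact Int.le_floor.mpr mhigh

lemma box_card {u γ : ℝ} (hγ : 2 ≤ γ) :
    (Finset.Icc ⌊u - (γ+1)/2⌋ ⌊u + (γ-1)/2⌋).card ≤ ⌈γ⌉₊ + 2 := by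
  rw [Int.card_Icc]
  have h1 : (⌊u + (γ-1)/2⌋ : ℝ) ≤ u + (γ-1)/2 := Int.floor_le _
  have h2 : u - (γ+1)/2 - 1 < (⌊u - (γ+1)/2⌋ : ℝ) := Int.sub_one_lt_floor _
  have hγc : γ ≤ (⌈γ⌉₊:ℝ) := Nat.le_ceil γ
  have h3 : ⌊u + (γ-1)/2⌋ + 1 - ⌊u - (γ+1)/2⌋ ≤ (⌈γ⌉₊ : ℤ) + 2 := by
    have h4 : ((⌊u + (γ-1)/2⌋ + 1 - ⌊u - (γ+1)/2⌋ : ℤ):ℝ) ≤ ((⌈γ⌉₊:ℤ):ℝ) + 2 := by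
      push_cast
      linarith
    exact_mod_cast h4
  calc (⌊u + (γ-1)/2⌋ + 1 - ⌊u - (γ+1)/2⌋).toNat ≤ ((⌈γ⌉₊:ℤ)+2).toNat :=
        Int.toNat_le_toNat h3
    _ = ⌈γ⌉₊ + 2 := by omega

lemma dilate_sub_K {t : Fin n → ℝ} {k j : ℤ} {mk m : Fin n → ℤ} {r : ℕ} {ε γ : ℝ}
    (hγ : 2 ≤ γ) (hε1 : ε < 1)
    (hrpow : γ + 1 ≤ 2 ^ ((r:ℝ)*(1-ε)))
    (hd : deepEmb r ε (gc t j m) (gc t k mk)) :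
    ((gc t j m).dilate γ).pts ⊆ (gc t k mk).pts := by
  have hj : k + r ≤ j := scale_ge hd
  have hlp : (0:ℝ) < 2^(-j) := two_zpow_pos _
  -- (γ+1) * 2^{-j} ≤ D j k ε
  have hgl : (γ+1) * 2^(-j) ≤ D j k ε := by
    have h1 : (γ+1) ≤ 2 ^ (((j:ℝ)-k)*(1-ε)) := by
      refine le_trans hrpow (Real.rpow_le_rpow_of_exponent_le (by norm_num) ?_)
      have : (r:ℝ) ≤ (j:ℝ) - k := by
        have : (r:ℤ) ≤ j - k := by omega
        exact_mod_cast this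
      nlinarith
    have h2 := mul_le_mul_of_nonneg_right h1
      (le_of_lt (Real.rpow_pos_of_pos (by norm_num : (0:ℝ)<2) (-(j:ℝ))))
    rw [← Real.rpow_add (by norm_num : (0:ℝ) < 2)] at h2
    rw [zpow_eq_rpow, D_eq]
    have hjr : ((-j : ℤ) : ℝ) = -(j:ℝ) := by push_cast; ring
    rw [hjr]
    calc (γ+1) * 2^(-(j:ℝ)) ≤ 2 ^ (((j:ℝ)-k)*(1-ε) + -(j:ℝ)) := h2
      _ = 2 ^ ((-(j:ℝ))*ε + (-(k:ℝ))*(1-ε)) := by ring_nf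
  have hx0 : pt (gc t j m).a ∈ (gc t j m).pts := corner_mem hlp
  have hx0K := hd.1 hx0
  have hD2 : 1/2 * (gc t j m).l ^ ε * (gc t k mk).l ^ (1-ε) = 1/2 * D j k ε := by
    rw [gc_l, gc_l, D]; ring
  -- lower margin
  have claim_lo : ∀ i, t i + 2^(-k)*(mk i : ℝ) + (γ+1)/2 * 2^(-j) ≤ (gc t j m).a i := by
    intro i
    have hKx := (mem_gc_iff.mp hx0K) i
    have key : 1/2 * D j k ε ≤ (pt (gc t j m).a) i - (t i + 2^(-k)*(mk i : ℝ)) := by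
      apply le_of_forall_pos_le_add
      intro η hη
      set z : EuclideanSpace ℝ (Fin n) :=
        pt (Function.update (gc t j m).a i (t i + 2^(-k)*(mk i : ℝ) - η)) with hzd
      have hzi : z i = t i + 2^(-k)*(mk i : ℝ) - η := by
        show Function.update (gc t j m).a i _ i = _
        rw [Function.update_self]
      have hz : z ∉ (gc t k mk).pts := by
        intro hzK
        have := (mem_gc_iff.mp hzK) i
        rw [hzi] at this
        linarith [this.1]
      have h1 := hd.2.2 _ hx0 z hz
      rw [hD2] at h1
      have hds : dist (pt (gc t j m).a) z = |(pt (gc t j m).a) i - z i| := by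
        apply dist_single
        intro i' hi'
        show _ = Function.update (gc t j m).a i _ i'
        rw [Function.update_of_ne hi']
        rfl
      rw [hds, hzi] at h1
      have habs : |(pt (gc t j m).a) i - (t i + 2^(-k)*(mk i:ℝ) - η)|
          = (pt (gc t j m).a) i - (t i + 2^(-k)*(mk i:ℝ)) + η := by
        rw [abs_of_nonneg]
        · ring
        · have : t i + 2^(-k)*(mk i:ℝ) ≤ (pt (gc t j m).a) i := hKx.1
          linarith
      rw [habs] at h1
      linarith
    have : (pt (gc t j m).a) i = (gc t j m).a i := rfl
    rw [this] at key
    linarith [key, hgl]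
  -- upper margin
  have claim_hi : ∀ i, (gc t j m).a i ≤ t i + 2^(-k)*(mk i : ℝ) + 2^(-k) - (γ+1)/2 * 2^(-j) := by
    intro i
    have hKx := (mem_gc_iff.mp hx0K) i
    set z : EuclideanSpace ℝ (Fin n) :=
      pt (Function.update (gc t j m).a i (t i + 2^(-k)*(mk i : ℝ) + 2^(-k))) with hzd
    have hzi : z i = t i + 2^(-k)*(mk i : ℝ) + 2^(-k) := by
      show Function.update (gc t j m).a i _ i = _
      rw [Function.update_self]
    have hz : z ∉ (gc t k mk).pts := by
      intro hzK
      have := (mem_gc_iff.mp hzK) i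
      rw [hzi] at this
      linarith [this.2]
    have h1 := hd.2.2 _ hx0 z hz
    rw [hD2] at h1
    have hds : dist (pt (gc t j m).a) z = |(pt (gc t j m).a) i - z i| := by
      apply dist_single
      intro i' hi'
      show _ = Function.update (gc t j m).a i _ i'
      rw [Function.update_of_ne hi']
      rfl
    rw [hds, hzi] at h1
    have habs : |(pt (gc t j m).a) i - (t i + 2^(-k)*(mk i:ℝ) + 2^(-k))|
        = t i + 2^(-k)*(mk i:ℝ) + 2^(-k) - (gc t j m).a i := by
      rw [abs_of_nonpos]
      · show -((gc t j m).a i - _) = _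
        ring
      · have : (pt (gc t j m).a) i < t i + 2^(-k)*(mk i:ℝ) + 2^(-k) := hKx.2
        linarith
    rw [habs] at h1
    linarith [h1, hgl]
  -- conclude
  intro x hx
  rw [mem_gc_iff]
  intro i
  have h := hx i
  rw [dilate_a, dilate_l, gc_l] at h
  constructor
  · have := claim_lo i
    nlinarith [h.1, hlp]
  · have := claim_hi i
    nlinarith [h.2, hlp]

end S4

open S4

/-- Bounded overlap of the dilates of the maximal `(r,ε)`-deeply embedded
dyadic subcubes of `K ∈ 𝒟`: (i) there is `β = β(n,γ,r,ε)` with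
`Σ_{J ∈ M_{(r,ε)-deep}(K)} 1_{γJ} ≤ β`, and (ii) if moreover `γ + 1 ≤ 2^{r(1−ε)}` then
`γJ ⊆ K` for every such `J`, so `Σ_J 1_{γJ} ≤ β 1_K`. -/
theorem statement4 (n r : ℕ) (ε γ : ℝ) (hn : 1 ≤ n) (hr : 1 ≤ r)
    (hε0 : 0 < ε) (hε1 : ε < 1) (hγ : 2 ≤ γ) :
    ∃ β : ℕ, ∀ t : Fin n → ℝ, ∀ K ∈ dyadicGrid t,
      (∀ y : EuclideanSpace ℝ (Fin n),
        {J : QCube n | maxDeepEmb t r ε J K ∧ y ∈ (J.dilate γ).pts}.Finite ∧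
        {J : QCube n | maxDeepEmb t r ε J K ∧ y ∈ (J.dilate γ).pts}.ncard ≤ β) ∧
      (γ + 1 ≤ 2 ^ ((r : ℝ) * (1 - ε)) →
        (∀ J : QCube n, maxDeepEmb t r ε J K → (J.dilate γ).pts ⊆ K.pts) ∧
        ∀ y : EuclideanSpace ℝ (Fin n), y ∉ K.pts →
          {J : QCube n | maxDeepEmb t r ε J K ∧ y ∈ (J.dilate γ).pts} = ∅) := by
  classical
  have hn0 : 0 < n := hn
  set A : ℕ := A0 n γ ε with hA
  set C : ℝ := (n:ℝ)*(γ+2)+1 with hC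
  have hn1 : (1:ℝ) ≤ n := by exact_mod_cast hn
  have hC1 : 1 ≤ C := by rw [hC]; nlinarith
  set W : ℕ := ⌈Real.logb 2 (4*C)/ε⌉₊ with hW
  set B : ℕ := max (r+1) A with hB
  set M : ℕ := ⌈γ⌉₊ + 2 with hM
  refine ⟨((B+1)+(2*W+1)) * M ^ n, ?_⟩
  intro t K hK
  obtain ⟨k, mk, rfl⟩ := mem_grid_iff.mp hK
  constructor
  · -- part (i)
    intro y
    set Sy := {J : QCube n | maxDeepEmb t r ε J (gc t k mk) ∧ y ∈ (J.dilate γ).pts} with hSy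
    set Box : ℤ → Fin n → Finset ℤ := fun j i =>
      Finset.Icc ⌊(y i - t i)/(2:ℝ)^(-j) - (γ+1)/2⌋ ⌊(y i - t i)/(2:ℝ)^(-j) + (γ-1)/2⌋ with hBox
    -- common finishing argument
    have finish : ∀ I : Finset ℤ, I.card ≤ (B+1)+(2*W+1) →
        (∀ J ∈ Sy, ∃ (j : ℤ) (m : Fin n → ℤ), J = gc t j m ∧ j ∈ I ∧ ∀ i, m i ∈ Box j i) →
        Sy.Finite ∧ Sy.ncard ≤ ((B+1)+(2*W+1)) * M ^ n := by
      intro I hIcard hscale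
      set F : Finset (ℤ × (Fin n → ℤ)) :=
        I.biUnion (fun j => ({j} : Finset ℤ) ×ˢ Fintype.piFinset (fun i => Box j i)) with hF
      have hsub : Sy ⊆ (fun p : ℤ × (Fin n → ℤ) => gc t p.1 p.2) '' ↑F := by
        intro J hJ
        obtain ⟨j, m, rfl, hjI, hbox⟩ := hscale J hJ
        refine ⟨(j, m), ?_, rfl⟩
        rw [Finset.mem_coe, hF, Finset.mem_biUnion]
        exact ⟨j, hjI, Finset.mem_product.mpr
          ⟨Finset.mem_singleton_self j, Fintype.mem_piFinset.mpr hbox⟩⟩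
      have hfin : Sy.Finite := (F.finite_toSet.image _).subset hsub
      refine ⟨hfin, ?_⟩
      have h1 : Sy.ncard ≤ ((fun p : ℤ × (Fin n → ℤ) => gc t p.1 p.2) '' ↑F).ncard :=
        Set.ncard_le_ncard hsub (F.finite_toSet.image _)
      have h2 : ((fun p : ℤ × (Fin n → ℤ) => gc t p.1 p.2) '' ↑F).ncard
          = (F.image (fun p : ℤ × (Fin n → ℤ) => gc t p.1 p.2)).card := by
        rw [← Set.ncard_coe_finset, Finset.coe_image]
      have h3 : (F.image (fun p : ℤ × (Fin n → ℤ) => gc t p.1 p.2)).card ≤ F.card :=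
        Finset.card_image_le
      have h4 : F.card ≤ I.card * M ^ n := by
        calc F.card ≤ ∑ j ∈ I, (({j} : Finset ℤ) ×ˢ Fintype.piFinset (fun i => Box j i)).card :=
              Finset.card_biUnion_le
          _ ≤ I.card * M ^ n := by
            rw [← smul_eq_mul]
            apply Finset.sum_le_card_nsmul
            intro j _
            rw [Finset.card_product, Finset.card_singleton, one_mul, Fintype.card_piFinset]
            calc (∏ i, (Box j i).card) ≤ ∏ _i : Fin n, M :=
                  Finset.prod_le_prod' (fun i _ => box_card hγ)
              _ = M ^ n := by rw [Finset.prod_const, Finset.card_univ, Fintype.card_fin]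
      calc Sy.ncard ≤ F.card := by omega
        _ ≤ I.card * M ^ n := h4
        _ ≤ ((B+1)+(2*W+1)) * M ^ n := Nat.mul_le_mul_right _ hIcard
    -- scale extraction for members of Sy
    have hrep : ∀ J ∈ Sy, ∃ (j : ℤ) (m : Fin n → ℤ), J = gc t j m ∧ k + r ≤ j ∧
        ∀ i, m i ∈ Box j i := by
      intro J hJ
      obtain ⟨j, m, rfl⟩ := mem_grid_iff.mp hJ.1.1
      exact ⟨j, m, rfl, scale_ge hJ.1.2.1, fun i => m_mem_box hJ.2 i⟩
    by_cases hT : ∃ (j : ℤ) (m : Fin n → ℤ), gc t j m ∈ Sy ∧ k + (B:ℤ) < j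
    · obtain ⟨jt, mt, hmemt, hjt⟩ := hT
      have hrB : (r:ℤ) + 1 ≤ (B:ℤ) := by exact_mod_cast le_max_left (r+1) A
      have hAB : (A:ℤ) ≤ (B:ℤ) := by exact_mod_cast le_max_right (r+1) A
      have pair : ∀ (j₁ j₂ : ℤ) (m₁ m₂ : Fin n → ℤ), gc t j₁ m₁ ∈ Sy → gc t j₂ m₂ ∈ Sy →
          k + (B:ℤ) < j₁ → k + (B:ℤ) < j₂ → j₁ - j₂ ≤ (W:ℤ) := by
        intro j₁ j₂ m₁ m₂ h₁ h₂ hb₁ hb₂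
        obtain ⟨z, hz, hdz⟩ := upper_bound hn0 hγ hε0 hε1 h₁.1 (by omega) h₁.2
        have hlow := lower_bound hγ h₂.1.2.1 h₂.2 hz
        have htiny := tiny_cond (j := j₂) (k := k) hn0 hγ hε0 hε1 (by omega)
        have hq : 1/4 * D j₂ k ε ≤ C * D j₁ k ε := by
          have hl2 : (0:ℝ) < 2^(-j₂) := two_zpow_pos _
          rw [hC]
          nlinarith [hlow, htiny, hdz]
        exact gap hC1 hε0 hq
      refine finish (Finset.Icc (k+(r:ℤ)) (k+(B:ℤ)) ∪ Finset.Icc (jt - W) (jt + W)) ?_ ?_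
      · calc (Finset.Icc (k+(r:ℤ)) (k+(B:ℤ)) ∪ Finset.Icc (jt-W) (jt+W)).card
            ≤ (Finset.Icc (k+(r:ℤ)) (k+(B:ℤ))).card + (Finset.Icc (jt-(W:ℤ)) (jt+W)).card :=
              Finset.card_union_le _ _
          _ ≤ (B+1)+(2*W+1) := by
              rw [Int.card_Icc, Int.card_Icc]
              omega
      · intro J hJ
        obtain ⟨j, m, rfl, hjr, hbox⟩ := hrep J hJ
        refine ⟨j, m, rfl, ?_, hbox⟩
        rw [Finset.mem_union, Finset.mem_Icc, Finset.mem_Icc]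
        by_cases hcase : j ≤ k + (B:ℤ)
        · exact Or.inl ⟨by omega, hcase⟩
        · have g1 := pair j jt m mt hJ hmemt (by omega) hjt
          have g2 := pair jt j mt m hmemt hJ hjt (by omega)
          exact Or.inr ⟨by omega, by omega⟩
    · push_neg at hT
      refine finish (Finset.Icc (k+(r:ℤ)) (k+(B:ℤ))) ?_ ?_
      · rw [Int.card_Icc]; omega
      · intro J hJ
        obtain ⟨j, m, rfl, hjr, hbox⟩ := hrep J hJ
        have := hT j m hJ
        exact ⟨j, m, rfl, Finset.mem_Icc.mpr ⟨by omega, by omega⟩, hbox⟩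
  · -- part (ii)
    intro hyp
    have hmain : ∀ J : QCube n, maxDeepEmb t r ε J (gc t k mk) →
        (J.dilate γ).pts ⊆ (gc t k mk).pts := by
      intro J hJ
      obtain ⟨j, m, rfl⟩ := mem_grid_iff.mp hJ.1
      exact dilate_sub_K hγ hε1 hyp hJ.2.1
    refine ⟨hmain, ?_⟩
    intro y hy
    rw [Set.eq_empty_iff_forall_notMem]
    rintro J ⟨hJm, hJy⟩
    exact hy (hmain J hJm hJy)
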